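/- Fix an integer h ≥ 1. If p_h(t) = t^{4h} − t^{4h−1} + t^{2h} − t + 1 is a product of cyclotomic polynomials, then h is congruent to either 1 or 2 modulo 5. -/

import Mathlib

open Polynomial


lemma xpow_mod_dvd (N e : ℕ) : ((X : ℤ[X]) ^ N - 1) ∣ X ^ e - X ^ (e % N) := by
  have h1 : (X : ℤ[X]) ^ e = X ^ (e % N) * (X ^ N) ^ (e / N) := by
    rw [← pow_mul, ← pow_add, Nat.mod_add_div]
  have h2 : (X : ℤ[X]) ^ e - X ^ (e % N) = X ^ (e % N) * ((X ^ N) ^ (e / N) - 1) := by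
    rw [h1]; ring
  rw [h2]
  exact Dvd.dvd.mul_left (by simpa using sub_dvd_pow_sub_pow ((X : ℤ[X]) ^ N) 1 (e / N)) _

lemma neg_primitiveRoot {ζ : ℂ} {n : ℕ} (hodd : Odd n) (_hpos : 0 < n)
    (hζ : IsPrimitiveRoot ζ n) : IsPrimitiveRoot (-ζ) (2 * n) := by
  have hcop : Nat.Coprime 2 n := by
    rw [Nat.coprime_two_left]; exact hodd
  constructor
  · have h1 : (-ζ) ^ (2 * n) = ((-ζ) ^ 2) ^ n := by rw [← pow_mul]
    rw [h1, neg_sq, ← pow_mul, mul_comm 2 n, pow_mul, hζ.pow_eq_one, one_pow]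
  · intro l hl
    have h2l : ζ ^ (2 * l) = 1 := by
      have h1 : ((-ζ) ^ 2) ^ l = 1 := by
        rw [← pow_mul, mul_comm 2 l, pow_mul, hl, one_pow]
      rwa [neg_sq, ← pow_mul] at h1
    have hnl : n ∣ l := by
      have h2 := hζ.dvd_of_pow_eq_one _ h2l
      rw [mul_comm] at h2
      exact (Nat.Coprime.dvd_of_dvd_mul_right hcop.symm h2)
    have hζl : ζ ^ l = 1 := by
      obtain ⟨d, rfl⟩ := hnl
      rw [pow_mul, hζ.pow_eq_one, one_pow]
    have hevenl : Even l := by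
      have hneg : (-1 : ℂ) ^ l = 1 := by
        have h3 : (-ζ) ^ l = 1 := hl
        rw [neg_eq_neg_one_mul, mul_pow, hζl, mul_one] at h3
        exact h3
      exact (neg_one_pow_eq_one_iff_even (by norm_num : (-1 : ℂ) ≠ 1)).mp hneg
    exact Nat.Coprime.mul_dvd_of_dvd_of_dvd hcop hevenl.two_dvd hnl

lemma block_lemma {k a b c : ℕ} (hk : 2 ≤ k) (ha : a < 5 ^ k) (hb : b < 5 ^ k) (hc : c < 5 ^ k)
    (hdvd : cyclotomic (5 ^ k) ℤ ∣ (1 + X + X ^ a + X ^ b + X ^ c : ℤ[X])) : False := by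
  haveI : Fact (Nat.Prime 5) := ⟨by norm_num⟩
  set M := 5 ^ (k - 1) with hM
  have hM5 : 5 ≤ M := by
    calc (5:ℕ) = 5 ^ 1 := (pow_one 5).symm
    _ ≤ 5 ^ (k - 1) := Nat.pow_le_pow_right (by norm_num) (by omega)
  have hNM : 5 ^ k = M * 5 := by rw [hM, ← pow_succ]; congr 1; omega
  set r : ℤ[X] := 1 + X + X ^ a + X ^ b + X ^ c with hr
  have hnn : ∀ j, 0 ≤ r.coeff j := by
    intro j
    simp only [hr, coeff_add, coeff_one, coeff_X_pow, coeff_X]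
    split_ifs <;> norm_num
  have h0 : 1 ≤ r.coeff 0 := by
    simp only [hr, coeff_add, coeff_one, coeff_X_pow, coeff_X]
    split_ifs <;> norm_num
  have h1 : 1 ≤ r.coeff 1 := by
    simp only [hr, coeff_add, coeff_one, coeff_X_pow, coeff_X]
    split_ifs <;> norm_num
  have hr0 : r ≠ 0 := by
    intro hzero
    rw [hzero] at h0
    simp at h0
  obtain ⟨g, hg⟩ := hdvd
  have hg0 : g ≠ 0 := by
    rintro rfl
    rw [mul_zero] at hg
    exact hr0 hg
  have hdegr : r.natDegree ≤ 5 ^ k - 1 := by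
    rw [natDegree_le_iff_coeff_eq_zero]
    intro m hm
    simp only [hr, coeff_add, coeff_one, coeff_X_pow, coeff_X]
    have h25 : 25 ≤ 5 ^ k := by
      calc (25:ℕ) = 5 ^ 2 := by norm_num
      _ ≤ 5 ^ k := Nat.pow_le_pow_right (by norm_num) hk
    split_ifs <;> omega
  have hdegPhi : (cyclotomic (5 ^ k) ℤ).natDegree = 4 * M := by
    rw [natDegree_cyclotomic, Nat.totient_prime_pow (by norm_num) (by omega : 0 < k)]
    rw [← hM]; ring
  have hdegg : g.natDegree ≤ M - 1 := by
    have hmul := Polynomial.Monic.natDegree_mul' (cyclotomic.monic (5 ^ k) ℤ) hg0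
    rw [← hg, hdegPhi] at hmul
    omega
  have hgeom : cyclotomic (5 ^ k) ℤ = ∑ i ∈ Finset.range 5, ((X : ℤ[X]) ^ M) ^ i := by
    rw [show k = (k - 1) + 1 by omega]
    exact cyclotomic_prime_pow_eq_geom_sum (by norm_num)
  have htrans : ∀ j, j < M → g.coeff j = r.coeff j := by
    intro j hj
    rw [hg, hgeom, Finset.sum_mul, finset_sum_coeff]
    rw [Finset.sum_range_succ, Finset.sum_range_succ, Finset.sum_range_succ,
      Finset.sum_range_succ, Finset.sum_range_one]
    simp only [pow_zero, one_mul, ← pow_mul, X_pow_mul, coeff_mul_X_pow']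
    split_ifs <;> omega
  have hevr : r.eval 1 = 5 := by simp [hr]
  have hevPhi : (cyclotomic (5 ^ k) ℤ).eval 1 = 5 := by
    rw [show k = (k - 1) + 1 by omega]
    have := eval_one_cyclotomic_prime_pow (R := ℤ) (p := 5) (k - 1)
    exact_mod_cast this
  have hevg : g.eval 1 = 1 := by
    have hcg := congrArg (eval 1) hg
    rw [eval_mul, hevPhi, hevr] at hcg
    linarith
  have hsum : g.eval 1 = ∑ j ∈ Finset.range M, g.coeff j := by
    rw [eval_eq_sum_range' (n := M) (by omega : g.natDegree < M)]
    simp only [one_pow, mul_one]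
  have hge : 2 ≤ ∑ j ∈ Finset.range M, g.coeff j := by
    have hsub : ({0, 1} : Finset ℕ) ⊆ Finset.range M := by
      intro x hx
      simp only [Finset.mem_insert, Finset.mem_singleton] at hx
      rcases hx with rfl | rfl <;> simp <;> omega
    have hle : ∑ j ∈ ({0, 1} : Finset ℕ), g.coeff j ≤ ∑ j ∈ Finset.range M, g.coeff j :=
      Finset.sum_le_sum_of_subset_of_nonneg hsub (fun i hi _ => by
        rw [htrans i (Finset.mem_range.mp hi)]; exact hnn i)
    have hpair : ∑ j ∈ ({0, 1} : Finset ℕ), g.coeff j = g.coeff 0 + g.coeff 1 := by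
      rw [Finset.sum_pair (by norm_num : (0 : ℕ) ≠ 1)]
    rw [hpair] at hle
    have ht0 := htrans 0 (by omega)
    have ht1 := htrans 1 (by omega)
    omega
  omega


open Polynomial

theorem stmt_8 (h : ℕ) (hh : 1 ≤ h)
    (hprod : ∃ S : Multiset ℕ, (∀ n ∈ S, 0 < n) ∧
      ((X : ℤ[X]) ^ (4 * h) - X ^ (4 * h - 1) + X ^ (2 * h) - X + 1 =
        (S.map (fun n => cyclotomic n ℤ)).prod)) :
    h % 5 = 1 ∨ h % 5 = 2 := by
  haveI : Fact (Nat.Prime 5) := ⟨by norm_num⟩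
  obtain ⟨S, hSpos, hP⟩ := hprod
  set P : ℤ[X] := X ^ (4 * h) - X ^ (4 * h - 1) + X ^ (2 * h) - X + 1 with hPdef
  -- Step 1: the product of the values at -1 equals 5
  have h5 : (S.map fun n => eval (-1 : ℤ) (cyclotomic n ℤ)).prod = 5 := by
    have hc := congrArg (eval (-1 : ℤ)) hP
    rw [eval_multiset_prod, Multiset.map_map] at hc
    rw [show ((fun p => eval (-1:ℤ) p) ∘ fun n => cyclotomic n ℤ)
        = fun n => eval (-1 : ℤ) (cyclotomic n ℤ) from rfl] at hc
    rw [← hc]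
    simp only [hPdef, eval_add, eval_sub, eval_pow, eval_X, eval_one]
    rw [Even.neg_one_pow ⟨2 * h, by ring⟩, Odd.neg_one_pow ⟨2 * h - 1, by omega⟩,
      Even.neg_one_pow ⟨h, by ring⟩]
    ring
  -- no factor vanishes at -1
  have hnz : ∀ n ∈ S, eval (-1 : ℤ) (cyclotomic n ℤ) ≠ 0 := by
    intro n hn hzero
    have hmem : (0 : ℤ) ∈ S.map fun n => eval (-1 : ℤ) (cyclotomic n ℤ) := by
      rw [← hzero]
      exact Multiset.mem_map_of_mem _ hn
    have := Multiset.prod_eq_zero hmem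
    rw [h5] at this
    norm_num at this
  -- Step 2: some factor is divisible by 5
  have hdvd5 : (5 : ℤ) ∣ (S.map fun n => eval (-1 : ℤ) (cyclotomic n ℤ)).prod := by
    rw [h5]
  obtain ⟨v, hvmem, hv5⟩ := (by norm_num : Prime (5 : ℤ)).exists_mem_multiset_dvd hdvd5
  obtain ⟨n0, hn0S, rfl⟩ := Multiset.mem_map.mp hvmem
  have hn0pos : 0 < n0 := hSpos n0 hn0S
  -- Step 3: n0 = 5 ^ k * 2 with k ≥ 1
  set k := n0.factorization 5 with hkdef
  set m := n0 / 5 ^ k with hmdef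
  have hfact : 5 ^ k * m = n0 := Nat.ordProj_mul_ordCompl_eq_self n0 5
  have hm5 : ¬5 ∣ m := Nat.not_dvd_ordCompl (by norm_num) hn0pos.ne'
  have hmpos : 0 < m := by
    rcases Nat.eq_zero_or_pos m with hm0 | hmp
    · rw [hm0, mul_zero] at hfact; omega
    · exact hmp
  have hz : eval (-1 : ZMod 5) (cyclotomic n0 (ZMod 5)) = 0 := by
    have hcast : ((eval (-1 : ℤ) (cyclotomic n0 ℤ) : ℤ) : ZMod 5) = 0 := by
      rw [ZMod.intCast_zmod_eq_zero_iff_dvd]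
      exact_mod_cast hv5
    rw [← map_cyclotomic_int n0 (ZMod 5)]
    have := eval_intCast_map (Int.castRingHom (ZMod 5)) (cyclotomic n0 ℤ) (-1)
    simp only [Int.cast_neg, Int.cast_one] at this
    rw [this]
    exact_mod_cast hcast
  have hzm : eval (-1 : ZMod 5) (cyclotomic m (ZMod 5)) = 0 := by
    rcases Nat.eq_zero_or_pos k with hk0 | hkpos
    · rw [hk0, pow_zero, one_mul] at hfact
      rwa [hfact]
    · rw [← hfact, cyclotomic_mul_prime_pow_eq (ZMod 5) hm5 hkpos, eval_pow] at hz
      have hexp : 5 ^ k - 5 ^ (k - 1) ≠ 0 := by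
        have : 5 ^ (k - 1) < 5 ^ k := Nat.pow_lt_pow_right (by norm_num) (by omega)
        omega
      exact pow_eq_zero_iff hexp |>.mp hz
  haveI : NeZero (m : ZMod 5) := ⟨by
    rw [Ne, ZMod.natCast_eq_zero_iff]; exact hm5⟩
  have hprim : IsPrimitiveRoot (-1 : ZMod 5) m := isRoot_cyclotomic_iff.mp hzm
  have hm2 : m = 2 := by
    have hpow2 : (-1 : ZMod 5) ^ 2 = 1 := neg_one_sq
    have hd2 : m ∣ 2 := hprim.dvd_of_pow_eq_one 2 hpow2
    rcases (Nat.dvd_prime Nat.prime_two).mp hd2 with h1 | h2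
    · exfalso
      have hpow := hprim.pow_eq_one
      rw [h1, pow_one] at hpow
      have hne : (-1 : ZMod 5) ≠ 1 :=
        haveI : Fact (2 < 5) := ⟨by norm_num⟩
        ZMod.neg_one_ne_one
      exact absurd hpow hne
    · exact h2
  have hkpos : 0 < k := by
    rcases Nat.eq_zero_or_pos k with hk0 | hkp
    · exfalso
      have hn02 : n0 = 2 := by rw [← hfact, hk0, pow_zero, one_mul, hm2]
      apply hnz n0 hn0S
      rw [hn02, cyclotomic_two]
      simp
    · exact hkp
  have hn0eq : n0 = 2 * 5 ^ k := by rw [← hfact, hm2]; ring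
  -- Step 4: cyclotomic n0 divides P
  have hdvdP : cyclotomic n0 ℤ ∣ P := by
    rw [hP]
    exact Multiset.dvd_prod (Multiset.mem_map_of_mem _ hn0S)
  -- Step 5: cyclotomic (5^k) divides q := P.comp (-X)
  set q : ℤ[X] := X ^ (4 * h) + X ^ (4 * h - 1) + X ^ (2 * h) + X + 1 with hqdef
  have hcompP : P.comp (-X) = q := by
    simp only [hPdef, hqdef, sub_comp, add_comp, pow_comp, X_comp, one_comp]
    rw [Even.neg_pow ⟨2 * h, by ring⟩, Odd.neg_pow ⟨2 * h - 1, by omega⟩,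
      Even.neg_pow ⟨h, by ring⟩]
    ring
  have hq : cyclotomic (5 ^ k) ℤ ∣ q := by
    obtain ⟨w, hw⟩ := hdvdP
    have hqfac : q = (cyclotomic n0 ℤ).comp (-X) * w.comp (-X) := by
      rw [← hcompP, hw, mul_comp]
    have hNpos : 0 < 5 ^ k := Nat.pow_pos (by norm_num)
    have hstep : cyclotomic (5 ^ k) ℤ ∣ (cyclotomic n0 ℤ).comp (-X) := by
      rw [← map_dvd_map (Int.castRingHom ℚ) Int.cast_injective (cyclotomic.monic (5 ^ k) ℤ)]
      rw [map_comp, Polynomial.map_neg, Polynomial.map_X, map_cyclotomic_int, map_cyclotomic_int]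
      obtain ⟨ζ, hζ⟩ : ∃ ζ : ℂ, IsPrimitiveRoot ζ (5 ^ k) :=
        ⟨_, Complex.isPrimitiveRoot_exp (5 ^ k) hNpos.ne'⟩
      rw [cyclotomic_eq_minpoly_rat hζ hNpos]
      apply minpoly.dvd
      rw [aeval_comp]
      have haevneg : (aeval ζ) (-X : ℚ[X]) = -ζ := by simp
      rw [haevneg]
      have hmapeval : aeval (-ζ) (cyclotomic n0 ℚ) = eval (-ζ) (cyclotomic n0 ℂ) := by
        rw [aeval_def, eval₂_eq_eval_map, map_cyclotomic]
      rw [hmapeval]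
      have hnegprim : IsPrimitiveRoot (-ζ) (2 * 5 ^ k) :=
        neg_primitiveRoot (Odd.pow ⟨2, by norm_num⟩) hNpos hζ
      rw [hn0eq]
      exact hnegprim.isRoot_cyclotomic (by positivity)
    exact hqfac ▸ (hstep.mul_right _)
  -- Step 6: reduce exponents modulo N := 5 ^ k
  set N := 5 ^ k with hNdef
  have hrdvd : cyclotomic N ℤ ∣
      (1 + X + X ^ (2 * h % N) + X ^ ((4 * h - 1) % N) + X ^ (4 * h % N) : ℤ[X]) := by
    have hqr : ((X : ℤ[X]) ^ N - 1) ∣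
        q - (1 + X + X ^ (2 * h % N) + X ^ ((4 * h - 1) % N) + X ^ (4 * h % N)) := by
      have hsplit : q - (1 + X + X ^ (2 * h % N) + X ^ ((4 * h - 1) % N) + X ^ (4 * h % N))
          = ((X : ℤ[X]) ^ (4 * h) - X ^ (4 * h % N))
          + ((X ^ (4 * h - 1) - X ^ ((4 * h - 1) % N)) + (X ^ (2 * h) - X ^ (2 * h % N))) := by
        rw [hqdef]; ring
      rw [hsplit]
      exact dvd_add (xpow_mod_dvd N (4 * h)) (dvd_add (xpow_mod_dvd N (4 * h - 1))
        (xpow_mod_dvd N (2 * h)))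
    have hXN : cyclotomic N ℤ ∣ (X : ℤ[X]) ^ N - 1 := cyclotomic.dvd_X_pow_sub_one N ℤ
    have hd := dvd_sub hq (hXN.trans hqr)
    simpa using hd
  have hNpos : 0 < N := Nat.pow_pos (by norm_num)
  -- Step 7: conclude
  rcases Nat.lt_or_ge k 2 with hk1 | hk2
  · -- k = 1, N = 5
    have hN5 : N = 5 := by rw [hNdef, show k = 1 by omega, pow_one]
    rw [hN5] at hrdvd
    have h31 : eval (2 : ℤ) (cyclotomic 5 ℤ) = 31 := by
      rw [cyclotomic_prime ℤ 5]
      norm_num [Finset.sum_range_succ]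
    have hcase : h % 5 = 0 ∨ h % 5 = 1 ∨ h % 5 = 2 ∨ h % 5 = 3 ∨ h % 5 = 4 := by omega
    rcases hcase with hs | hs | hs | hs | hs
    · exfalso
      rw [show 2 * h % 5 = 0 by omega, show (4 * h - 1) % 5 = 4 by omega,
        show 4 * h % 5 = 0 by omega] at hrdvd
      have hev := eval_dvd (x := (2 : ℤ)) hrdvd
      rw [h31] at hev
      simp only [eval_add, eval_one, eval_X, eval_pow] at hev
      norm_num at hev
    · exact Or.inl hs
    · exact Or.inr hs
    · exfalso
      rw [show 2 * h % 5 = 1 by omega, show (4 * h - 1) % 5 = 1 by omega,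
        show 4 * h % 5 = 2 by omega] at hrdvd
      have hev := eval_dvd (x := (2 : ℤ)) hrdvd
      rw [h31] at hev
      simp only [eval_add, eval_one, eval_X, eval_pow] at hev
      norm_num at hev
    · exfalso
      rw [show 2 * h % 5 = 3 by omega, show (4 * h - 1) % 5 = 0 by omega,
        show 4 * h % 5 = 1 by omega] at hrdvd
      have hev := eval_dvd (x := (2 : ℤ)) hrdvd
      rw [h31] at hev
      simp only [eval_add, eval_one, eval_X, eval_pow] at hev
      norm_num at hev
  · -- k ≥ 2 : impossible
    exact absurd hrdvd (fun hd => block_lemma hk2 (Nat.mod_lt _ hNpos) (Nat.mod_lt _ hNpos)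
      (Nat.mod_lt _ hNpos) hd)
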